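/- Let k be a nonzero commutative ring, V an abelian group, and (U_n)_{n∈ℕ} a decreasing sequence of subgroups of V. If the canonical k-linear map k[V] → lim_n k[V/U_n] is an isomorphism, then there exists n ∈ ℕ with U_n = 0. -/

import Mathlib

theorem stmt_18 {k V : Type*} [CommRing k] [Nontrivial k] [AddCommGroup V]
    (U : ℕ → AddSubgroup V) (hU : ∀ n, U (n + 1) ≤ U n)
    (hinj : Function.Injective
      (fun x : V →₀ k => fun n : ℕ => Finsupp.mapDomain (QuotientAddGroup.mk' (U n)) x))
    (hsurj : ∀ s : (n : ℕ) → ((V ⧸ U n) →₀ k),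
      (∀ n, Finsupp.mapDomain
          (QuotientAddGroup.map (U (n + 1)) (U n) (AddMonoidHom.id V)
            (fun v hv => hU n hv)) (s (n + 1)) = s n) →
      ∃ x : V →₀ k, ∀ n, Finsupp.mapDomain (QuotientAddGroup.mk' (U n)) x = s n) :
    ∃ n, U n = ⊥ := by
  classical
  by_contra hbot
  push_neg at hbot
  have hU' : Antitone U := antitone_nat_of_succ_le hU
  -- Step 1: the intersection of all U n is trivial (from injectivity)
  have hI : ∀ v : V, (∀ n, v ∈ U n) → v = 0 := by
    intro v hv
    have h1 : (fun n : ℕ => Finsupp.mapDomain (QuotientAddGroup.mk' (U n))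
          (Finsupp.single v (1 : k)))
        = (fun n : ℕ => Finsupp.mapDomain (QuotientAddGroup.mk' (U n))
          (Finsupp.single (0 : V) (1 : k))) := by
      funext n
      rw [Finsupp.mapDomain_single, Finsupp.mapDomain_single]
      congr 1
      simpa [QuotientAddGroup.mk'_apply, QuotientAddGroup.eq_zero_iff] using hv n
    have h2 := hinj h1
    rcases (Finsupp.single_eq_single_iff _ _ _ _).mp h2 with ⟨h, -⟩ | ⟨h, -⟩
    · exact h
    · exact absurd h one_ne_zero
  -- Step 2: choose nonzero elements and a strictly increasing index sequence
  have hex : ∀ n, ∃ x : V, x ∈ U n ∧ x ≠ 0 := by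
    intro n
    rcases AddSubgroup.ne_bot_iff_exists_ne_zero.mp (hbot n) with ⟨⟨a, ha⟩, hane⟩
    exact ⟨a, ha, by simpa [Subtype.ext_iff] using hane⟩
  choose v hv hvne using hex
  have hm : ∀ n, ∃ m, v n ∉ U m := by
    intro n
    by_contra h
    push_neg at h
    exact hvne n (hI (v n) h)
  choose M hM using hm
  set N : ℕ → ℕ := fun j => Nat.rec 0 (fun i Ni => max (Ni + 1) (M Ni)) j with hNdef
  have hNsucc : ∀ j, N (j + 1) = max (N j + 1) (M (N j)) := fun j => rfl
  have hNmono : StrictMono N := by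
    apply strictMono_nat_of_lt_succ
    intro j
    rw [hNsucc]
    exact lt_of_lt_of_le (Nat.lt_succ_self _) (le_max_left _ _)
  set w : ℕ → V := fun j => v (N j) with hwdef
  have hw1 : ∀ j, w j ∈ U (N j) := fun j => hv (N j)
  have hw2 : ∀ j, w j ∉ U (N (j + 1)) := by
    intro j h
    exact hM (N j) (hU' (le_trans (le_max_right (N j + 1) (M (N j))) (hNsucc j).ge) h)
  -- nonzero classes
  have hnz : ∀ j n, N (j + 1) ≤ n → QuotientAddGroup.mk' (U n) (w j) ≠ 0 := by
    intro j n hn h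
    rw [QuotientAddGroup.mk'_apply, QuotientAddGroup.eq_zero_iff] at h
    exact hw2 j (hU' hn h)
  -- distinct classes
  have hd : ∀ i j n, i < j → N (i + 1) ≤ n →
      QuotientAddGroup.mk' (U n) (w i) ≠ QuotientAddGroup.mk' (U n) (w j) := by
    intro i j n hij hn h
    rw [QuotientAddGroup.mk'_apply, QuotientAddGroup.mk'_apply,
      QuotientAddGroup.eq_iff_sub_mem] at h
    have h1 : w i - w j ∈ U (N (i + 1)) := hU' hn h
    have h2 : w j ∈ U (N (i + 1)) := hU' (hNmono.monotone hij) (hw1 j)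
    have : w i ∈ U (N (i + 1)) := by
      have := add_mem h1 h2
      simpa using this
    exact hw2 i this
  -- Step 3: the compatible family
  set s : (n : ℕ) → ((V ⧸ U n) →₀ k) := fun n =>
    ∑ j ∈ Finset.range n,
      (Finsupp.single (QuotientAddGroup.mk' (U n) (w j)) (1 : k) - Finsupp.single 0 1)
    with hsdef
  have hcomp : ∀ n, Finsupp.mapDomain
      (QuotientAddGroup.map (U (n + 1)) (U n) (AddMonoidHom.id V)
        (fun v hv => hU n hv)) (s (n + 1)) = s n := by
    intro n
    set φ : (V ⧸ U (n + 1)) → (V ⧸ U n) :=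
      ⇑(QuotientAddGroup.map (U (n + 1)) (U n) (AddMonoidHom.id V) (fun v hv => hU n hv)) with hφ
    have hmap : Finsupp.mapDomain φ (s (n + 1)) =
        ∑ j ∈ Finset.range (n + 1),
          (Finsupp.single (φ (QuotientAddGroup.mk' (U (n + 1)) (w j))) (1 : k)
            - Finsupp.single (φ 0) 1) := by
      rw [hsdef]
      rw [show Finsupp.mapDomain φ = Finsupp.mapDomain.addMonoidHom φ from rfl]
      rw [map_sum]
      refine Finset.sum_congr rfl fun j _ => ?_
      rw [map_sub]
      simp [Finsupp.mapDomain.addMonoidHom_apply, Finsupp.mapDomain_single]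
    rw [hmap]
    have hφmk : ∀ y : V, φ (QuotientAddGroup.mk' (U (n + 1)) y)
        = QuotientAddGroup.mk' (U n) y := by
      intro y
      rw [hφ]
      rfl
    have hφ0 : φ (0 : V ⧸ U (n + 1)) = 0 := by
      have := hφmk 0
      simpa using this
    simp only [hφmk, hφ0]
    rw [Finset.sum_range_succ]
    have hlast : QuotientAddGroup.mk' (U n) (w n) = 0 := by
      rw [QuotientAddGroup.mk'_apply, QuotientAddGroup.eq_zero_iff]
      exact hU' hNmono.le_apply (hw1 n)
    rw [hlast]
    simp [hsdef]
  obtain ⟨x, hx⟩ := hsurj s hcomp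
  -- Step 4: counting contradiction
  set K : ℕ := x.support.card + 1 with hK
  set n : ℕ := N K with hn
  have hNK : ∀ j, j < K → N (j + 1) ≤ n := fun j hj => hNmono.monotone hj
  have key : ∀ j, j < K → (s n) (QuotientAddGroup.mk' (U n) (w j)) = 1 := by
    intro j hj
    have hjn : j < n := lt_of_lt_of_le hj (le_trans hNmono.le_apply le_rfl)
    rw [hsdef]
    rw [Finset.sum_apply']
    have hterm : ∀ i ∈ Finset.range n,
        ((Finsupp.single (QuotientAddGroup.mk' (U n) (w i)) (1 : k) - Finsupp.single 0 1
            : (V ⧸ U n) →₀ k)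
          (QuotientAddGroup.mk' (U n) (w j)))
        = if i = j then 1 else 0 := by
      intro i _
      rw [Finsupp.sub_apply, Finsupp.single_apply, Finsupp.single_apply]
      have h0 : ¬ ((0 : V ⧸ U n) = QuotientAddGroup.mk' (U n) (w j)) :=
        fun h => hnz j n (hNK j hj) h.symm
      rw [if_neg h0, sub_zero]
      by_cases hij : i = j
      · subst hij; simp
      · rw [if_neg, if_neg hij]
        rcases lt_or_gt_of_ne hij with h | h
        · exact hd i j n h (le_trans (hNmono.monotone (by omega : i + 1 ≤ K)) le_rfl)
        · exact fun he => hd j i n h (hNK j hj) he.symm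
    rw [Finset.sum_congr rfl hterm, Finset.sum_ite_eq' (Finset.range n) j fun _ => (1 : k)]
    rw [if_pos (Finset.mem_range.mpr hjn)]
  have hmem : ∀ j ∈ Finset.range K,
      QuotientAddGroup.mk' (U n) (w j) ∈ (s n).support := by
    intro j hj
    rw [Finsupp.mem_support_iff, key j (Finset.mem_range.mp hj)]
    exact one_ne_zero
  have hinjOn : Set.InjOn (fun j => QuotientAddGroup.mk' (U n) (w j))
      (Finset.range K : Set ℕ) := by
    intro a ha b hb h
    by_contra hab
    rcases lt_or_gt_of_ne hab with hlt | hlt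
    · exact hd a b n hlt (hNmono.monotone (by simpa using ha : a < K)) h
    · exact hd b a n hlt (hNmono.monotone (by simpa using hb : b < K)) h.symm
  have h1 : K ≤ (s n).support.card := by
    have := Finset.card_le_card_of_injOn _ hmem hinjOn
    simpa using this
  have h2 : (s n).support.card ≤ x.support.card := by
    rw [← hx n]
    exact le_trans (Finset.card_le_card Finsupp.mapDomain_support) Finset.card_image_le
  omega
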